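/- arXiv:2506.17305 — 5 statements merged into one kernel-verified Lean document; each statement's English description precedes it below -/
import Mathlib

section
/- Let σ : ℝ → ℝ be continuously differentiable, fix discretisation points T_1, …, T_N ∈ ℝ^d and target values f_1, …, f_N ∈ ℝ, and for X = (w_0, w) ∈ ℝ × ℝ^d set dev_i(X) = σ(w·T_i + w_0) − f_i and F(X) = max_{1≤i≤N} |dev_i(X)|. Suppose X* = (w_0*, w*) is a local minimizer of F with F(X*) > 0, and let P = {i : dev_i(X*) = F(X*)}, N = {i : dev_i(X*) = −F(X*)}, and v_i = σ'(w*·T_i + w_0*)·(1, T_i) ∈ ℝ^{1+d}. Then there exist λ_i ≥ 0 for i ∈ P ∪ N with Σ_{i∈P∪N} λ_i = 1 and Σ_{i∈P} λ_i v_i = Σ_{i∈N} λ_i v_i. -/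
/-- The deviation at the `i`-th discretisation point for a neural network with no hidden
layer, parameters `X = (w₀, w)`: `dev_i(X) = σ(w ⬝ T_i + w₀) − f_i`. -/
noncomputable def dev0 {d N : ℕ} (σ : ℝ → ℝ) (T : Fin N → Fin d → ℝ) (f : Fin N → ℝ)
    (X : ℝ × (Fin d → ℝ)) (i : Fin N) : ℝ :=
  σ ((∑ k, X.2 k * T i k) + X.1) - f i

/-- The uniform (Chebyshev/max) loss `F(X) = max_{1 ≤ i ≤ N} |dev_i(X)|`. -/
noncomputable def unifLoss0 {d N : ℕ} [NeZero N] (σ : ℝ → ℝ) (T : Fin N → Fin d → ℝ)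
    (f : Fin N → ℝ) (X : ℝ × (Fin d → ℝ)) : ℝ :=
  Finset.univ.sup' Finset.univ_nonempty fun i => |dev0 σ T f X i|

/-- The vector `v_i = σ'(w ⬝ T_i + w₀) • (1, T_i) ∈ ℝ^{1+d}`. -/
noncomputable def vvec {d N : ℕ} (σ : ℝ → ℝ) (T : Fin N → Fin d → ℝ)
    (X : ℝ × (Fin d → ℝ)) (i : Fin N) : Fin (d + 1) → ℝ :=
  deriv σ ((∑ k, X.2 k * T i k) + X.1) • (Fin.cons 1 (T i) : Fin (d + 1) → ℝ)

open Filter Set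

/-- If `g` has negative derivative at `0`, then `g t < g 0` for `t` slightly to the right. -/
lemma aux_right_deriv_neg {g : ℝ → ℝ} {c : ℝ} (hg : HasDerivAt g c 0) (hc : c < 0) :
    ∀ᶠ t in nhdsWithin (0:ℝ) (Set.Ioi 0), g t < g 0 := by
  have h := hasDerivAt_iff_tendsto_slope.mp hg
  have h2 : ∀ᶠ t in nhdsWithin (0:ℝ) ({0}ᶜ), slope g 0 t < 0 :=
    h.eventually (eventually_lt_nhds hc)
  have h3 : nhdsWithin (0:ℝ) (Set.Ioi 0) ≤ nhdsWithin (0:ℝ) ({0}ᶜ) :=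
    nhdsWithin_mono 0 fun x hx => ne_of_gt hx
  filter_upwards [h3 h2, self_mem_nhdsWithin] with t ht hht
  rw [slope_def_field] at ht
  have htpos : (0:ℝ) < t := hht
  rcases div_neg_iff.mp ht with ⟨hnum, _⟩ | ⟨_, hden⟩
  · linarith
  · linarith

/-- Necessary optimality condition for uniform-loss approximation, no hidden layer:
if `X* = (w₀*, w*)` is a local minimizer of `F` with `F(X*) > 0`, `P` the set of positive
maximal deviation points and `Np` the set of negative maximal deviation points,
then there are convex multipliers `λᵢ ≥ 0`, `∑_{i∈P∪Np} λᵢ = 1`, with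
`∑_{i∈P} λᵢ vᵢ = ∑_{i∈Np} λᵢ vᵢ`. -/
theorem uniform_no_hidden_layer_necessary_condition (d N : ℕ) (hd : 0 < d) [NeZero N]
    (σ : ℝ → ℝ) (hσ : ContDiff ℝ 1 σ) (T : Fin N → Fin d → ℝ) (f : Fin N → ℝ)
    (Xs : ℝ × (Fin d → ℝ))
    (hmin : IsLocalMin (unifLoss0 σ T f) Xs)
    (hpos : 0 < unifLoss0 σ T f Xs)
    (P Np : Finset (Fin N))
    (hP : ∀ i, i ∈ P ↔ dev0 σ T f Xs i = unifLoss0 σ T f Xs)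
    (hNp : ∀ i, i ∈ Np ↔ dev0 σ T f Xs i = -unifLoss0 σ T f Xs) :
    ∃ lam : Fin N → ℝ, (∀ i ∈ P ∪ Np, 0 ≤ lam i) ∧
      (∑ i ∈ P ∪ Np, lam i) = 1 ∧
      (∑ i ∈ P, lam i • vvec σ T Xs i) = ∑ i ∈ Np, lam i • vvec σ T Xs i := by
  classical
  set F0 := unifLoss0 σ T f Xs with hF0
  set A : Finset (Fin N) := P ∪ Np with hAdef
  set s : Fin N → ℝ := fun i => if i ∈ P then (1:ℝ) else -1 with hsdef
  set e : Fin N → (Fin (d+1) → ℝ) := fun i => s i • vvec σ T Xs i with hedef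
  have habs : ∀ i, |dev0 σ T f Xs i| ≤ F0 := fun i =>
    Finset.le_sup' (fun i => |dev0 σ T f Xs i|) (Finset.mem_univ i)
  have hPNp : ∀ i, i ∈ P → i ∈ Np → False := by
    intro i h1 h2
    have e1 := (hP i).mp h1
    have e2 := (hNp i).mp h2
    rw [e1] at e2; linarith
  have hsdev : ∀ i ∈ A, s i * dev0 σ T f Xs i = F0 := by
    intro i hi
    rcases Finset.mem_union.mp hi with h | h
    · simp [hsdef, h, (hP i).mp h]
    · have hnP : i ∉ P := fun hp => hPNp i hp h
      simp [hsdef, hnP, (hNp i).mp h]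
  have hmemA : ∀ i, i ∈ A ↔ |dev0 σ T f Xs i| = F0 := by
    intro i
    constructor
    · intro hi
      rcases Finset.mem_union.mp hi with h | h
      · rw [(hP i).mp h]; exact abs_of_nonneg hpos.le
      · rw [(hNp i).mp h, abs_neg]; exact abs_of_nonneg hpos.le
    · intro hi
      rcases (abs_eq hpos.le).mp hi with h | h
      · exact Finset.mem_union_left _ ((hP i).mpr h)
      · exact Finset.mem_union_right _ ((hNp i).mpr h)
  -- continuity of the deviation as a function of the parameters
  have hdevcont : ∀ i, Continuous (fun X : ℝ × (Fin d → ℝ) => dev0 σ T f X i) := by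
    intro i
    unfold dev0
    exact ((hσ.continuous).comp (by fun_prop)).sub continuous_const
  -- Main step: 0 is in the convex hull of the signed gradient directions
  have hmem : (0 : Fin (d+1) → ℝ) ∈ convexHull ℝ (e '' (A : Set (Fin N))) := by
    by_contra hnot
    have hfin : (e '' (A : Set (Fin N))).Finite := (A.finite_toSet.image _)
    obtain ⟨φ, u, hu0, hub⟩ := geometric_hahn_banach_point_closed
      (convex_convexHull ℝ _) (hfin.isClosed_convexHull ℝ) hnot
    have hu : (0:ℝ) < u := by simpa using hu0
    have hφe : ∀ i ∈ A, u < φ (e i) := fun i hi =>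
      hub _ (subset_convexHull ℝ _ ⟨i, hi, rfl⟩)
    -- express φ through its coordinates
    set c : Fin (d+1) → ℝ := fun k => φ (fun j => if k = j then (1:ℝ) else 0) with hcdef
    have hφ_eq : ∀ y : Fin (d+1) → ℝ, φ y = ∑ k, y k * c k := by
      intro y
      conv_lhs => rw [pi_eq_sum_univ y]
      rw [map_sum]
      exact Finset.sum_congr rfl fun k _ => by rw [map_smul]; simp [hcdef, smul_eq_mul]
    set h0 : ℝ := -(c 0) with hh0
    set hw : Fin d → ℝ := fun k => -(c k.succ) with hhw
    set φt : ℝ → ℝ × (Fin d → ℝ) :=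
      fun t => (Xs.1 + t * h0, fun k => Xs.2 k + t * hw k) with hφtdef
    have hφt0 : φt 0 = Xs := by
      simp only [hφtdef, zero_mul, add_zero]
    have hφtc : Continuous φt := by fun_prop
    have hφtend : Tendsto φt (nhdsWithin (0:ℝ) (Set.Ioi 0)) (nhds Xs) := by
      have := (hφtc.tendsto 0).mono_left (nhdsWithin_le_nhds (s := Set.Ioi (0:ℝ)))
      rwa [hφt0] at this
    -- each deviation eventually strictly below F0
    have key : ∀ i, ∀ᶠ t in nhdsWithin (0:ℝ) (Set.Ioi 0),
        |dev0 σ T f (φt t) i| < F0 := by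
      intro i
      set Ai : ℝ := (∑ k, Xs.2 k * T i k) + Xs.1 with hAi
      set Bi : ℝ := (∑ k, hw k * T i k) + h0 with hBi
      have hdevt : ∀ t, dev0 σ T f (φt t) i = σ (Ai + t * Bi) - f i := by
        intro t
        simp only [dev0, hφtdef]
        congr 2
        have : (∑ k, (Xs.2 k + t * hw k) * T i k)
            = (∑ k, Xs.2 k * T i k) + t * ∑ k, hw k * T i k := by
          rw [Finset.mul_sum, ← Finset.sum_add_distrib]
          exact Finset.sum_congr rfl fun k _ => by ring
        rw [this]; ring
      have hconti : Continuous fun t => dev0 σ T f (φt t) i :=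
        (hdevcont i).comp hφtc
      by_cases hi : i ∈ A
      · -- the signed deviation strictly decreases
        have h1lin : HasDerivAt (fun t : ℝ => Ai + t * Bi) Bi 0 := by
          simpa using ((hasDerivAt_id (0:ℝ)).mul_const Bi).const_add Ai
        have hσd : HasDerivAt σ (deriv σ Ai) Ai :=
          ((hσ.differentiable one_ne_zero) Ai).hasDerivAt
        have hσd' : HasDerivAt σ (deriv σ Ai) ((fun t : ℝ => Ai + t * Bi) 0) := by
          simpa using hσd
        have hAd : HasDerivAt (fun t => σ (Ai + t * Bi) - f i) (deriv σ Ai * Bi) 0 :=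
          (hσd'.comp 0 h1lin).sub_const (f i)
        have hfun : (fun t => dev0 σ T f (φt t) i) = fun t => σ (Ai + t * Bi) - f i :=
          funext hdevt
        have hg : HasDerivAt (fun t => dev0 σ T f (φt t) i) (deriv σ Ai * Bi) 0 := by
          rw [hfun]; exact hAd
        have hgs : HasDerivAt (fun t => s i * dev0 σ T f (φt t) i)
            (s i * (deriv σ Ai * Bi)) 0 := hg.const_mul (s i)
        -- the derivative equals -φ (e i) < 0
        have hBφ : Bi = -(φ (Fin.cons 1 (T i))) := by
          rw [hφ_eq, Fin.sum_univ_succ]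
          simp only [Fin.cons_zero, Fin.cons_succ, one_mul]
          have hsum : (∑ k, hw k * T i k) = -∑ j : Fin d, T i j * c j.succ := by
            rw [← Finset.sum_neg_distrib]
            exact Finset.sum_congr rfl fun k _ => by simp only [hhw]; try ring
          rw [hBi, hsum, hh0]; ring
        have hφei : φ (e i) = s i * (deriv σ Ai * φ (Fin.cons 1 (T i))) := by
          simp only [hedef, vvec, ← hAi, map_smul, smul_eq_mul]; try ring
        have hderneg : s i * (deriv σ Ai * Bi) = -(φ (e i)) := by
          rw [hBφ, hφei]; ring
        have hneg : s i * (deriv σ Ai * Bi) < 0 := by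
          rw [hderneg]
          have := hφe i hi
          linarith
        have h1 := aux_right_deriv_neg hgs hneg
        have hval0 : s i * dev0 σ T f (φt 0) i = F0 := by
          rw [hφt0]; exact hsdev i hi
        have h2 : Tendsto (fun t => s i * dev0 σ T f (φt t) i)
            (nhdsWithin (0:ℝ) (Set.Ioi 0)) (nhds F0) := by
          have hc2 : Continuous fun t => s i * dev0 σ T f (φt t) i :=
            continuous_const.mul hconti
          have := (hc2.tendsto 0).mono_left (nhdsWithin_le_nhds (s := Set.Ioi (0:ℝ)))
          simpa only [hval0] using this
        have h3 : ∀ᶠ t in nhdsWithin (0:ℝ) (Set.Ioi 0),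
            -F0 < s i * dev0 σ T f (φt t) i :=
          h2.eventually (eventually_gt_nhds (by linarith : -F0 < F0))
        have hsi : s i = 1 ∨ s i = -1 := by
          by_cases h : i ∈ P <;> simp [hsdef, h]
        filter_upwards [h1, h3] with t ht1 ht3
        rw [hval0] at ht1
        rcases hsi with h | h <;> rw [h] at ht1 ht3 <;>
          [skip; skip] <;> rw [abs_lt] <;> constructor <;> linarith
      · -- strictly inactive index: continuity suffices
        have hlt : |dev0 σ T f Xs i| < F0 :=
          lt_of_le_of_ne (habs i) (fun h => hi ((hmemA i).mpr h))
        have h2 : Tendsto (fun t => |dev0 σ T f (φt t) i|)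
            (nhdsWithin (0:ℝ) (Set.Ioi 0)) (nhds |dev0 σ T f Xs i|) := by
          have := ((hconti.abs).tendsto 0).mono_left (nhdsWithin_le_nhds (s := Set.Ioi (0:ℝ)))
          rwa [hφt0] at this
        exact h2.eventually (eventually_lt_nhds hlt)
    have hall : ∀ᶠ t in nhdsWithin (0:ℝ) (Set.Ioi 0),
        unifLoss0 σ T f (φt t) < F0 := by
      filter_upwards [Filter.eventually_all.mpr key] with t ht
      exact (Finset.sup'_lt_iff Finset.univ_nonempty).mpr fun i _ => ht i
    have hge : ∀ᶠ t in nhdsWithin (0:ℝ) (Set.Ioi 0),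
        F0 ≤ unifLoss0 σ T f (φt t) := hφtend.eventually hmin
    obtain ⟨t, h1, h2⟩ := (hall.and hge).exists
    linarith
  -- extract convex multipliers
  rw [convexHull_eq] at hmem
  obtain ⟨ι, t, w, z, hw0, hw1, hz, hcm⟩ := hmem
  have hz' : ∀ i ∈ t, ∃ m, m ∈ A ∧ e m = z i := by
    intro i hi
    obtain ⟨m, hm, hme⟩ := hz i hi
    exact ⟨m, hm, hme⟩
  choose! j hjA hje using hz'
  set lam : Fin N → ℝ := fun m => ∑ i ∈ t.filter (fun i => j i = m), w i with hlam
  have hlamnn : ∀ m, 0 ≤ lam m := fun m =>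
    Finset.sum_nonneg fun i hi => hw0 i (Finset.mem_of_mem_filter i hi)
  have hsum1 : ∑ m ∈ A, lam m = 1 := by
    rw [hlam]
    rw [Finset.sum_fiberwise_of_maps_to hjA w]
    exact hw1
  have hsum0 : ∑ m ∈ A, lam m • e m = 0 := by
    have step1 : ∑ m ∈ A, lam m • e m
        = ∑ m ∈ A, ∑ i ∈ t.filter (fun i => j i = m), w i • z i := by
      refine Finset.sum_congr rfl fun m hm => ?_
      rw [hlam, Finset.sum_smul]
      refine Finset.sum_congr rfl fun i hi => ?_
      obtain ⟨hit, hji⟩ := Finset.mem_filter.mp hi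
      rw [← hje i hit, hji]
    rw [step1, Finset.sum_fiberwise_of_maps_to hjA]
    rw [← Finset.centerMass_eq_of_sum_1 _ _ hw1]
    exact hcm
  have hdisj : Disjoint P Np := Finset.disjoint_left.mpr fun {i} h1 h2 => hPNp i h1 h2
  rw [hAdef, Finset.sum_union hdisj] at hsum0
  have h1 : ∀ m ∈ P, lam m • e m = lam m • vvec σ T Xs m := by
    intro m hm; simp [hedef, hsdef, hm]
  have h2 : ∀ m ∈ Np, lam m • e m = -(lam m • vvec σ T Xs m) := by
    intro m hm
    have hnP : m ∉ P := fun h => hPNp m h hm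
    simp [hedef, hsdef, hnP]
  rw [Finset.sum_congr rfl h1, Finset.sum_congr rfl h2, Finset.sum_neg_distrib,
    add_neg_eq_zero] at hsum0
  exact ⟨lam, fun i _ => hlamnn i, hsum1, hsum0⟩
end

section
/- Let σ : ℝ → ℝ be continuously differentiable, fix discretisation points T_1, …, T_N ∈ ℝ^d and target values f_1, …, f_N ∈ ℝ, and for X = (w_0, w) ∈ ℝ × ℝ^d set dev_i(X) = σ(w·T_i + w_0) − f_i and G(X) = Σ_{i=1}^N |dev_i(X)|. Suppose X* = (w_0*, w*) is a local minimizer of G, and let P = {i : dev_i(X*) > 0}, N = {i : dev_i(X*) < 0}, C = {i : dev_i(X*) = 0}, and v_i = σ'(w*·T_i + w_0*)·(1, T_i) ∈ ℝ^{1+d}. Then Σ_{i∈P} v_i − Σ_{i∈N} v_i belongs to the Minkowski sum Q = Σ_{i∈C} co{v_i, −v_i}. -/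
/-- The Manhattan (ℓ₁) loss `G(X) = ∑_{i=1}^N |dev_i(X)|`. -/
noncomputable def manhattanLoss0 {d N : ℕ} (σ : ℝ → ℝ) (T : Fin N → Fin d → ℝ)
    (f : Fin N → ℝ) (X : ℝ × (Fin d → ℝ)) : ℝ :=
  ∑ i, |dev0 σ T f X i|

open Filter Topology Set

lemma dirderiv_nonneg (d N : ℕ) (σ : ℝ → ℝ) (hσ : ContDiff ℝ 1 σ)
    (T : Fin N → Fin d → ℝ) (f : Fin N → ℝ) (Xs : ℝ × (Fin d → ℝ))
    (hmin : IsLocalMin (manhattanLoss0 σ T f) Xs)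
    (P Np C : Finset (Fin N))
    (hP : ∀ i, i ∈ P ↔ 0 < dev0 σ T f Xs i)
    (hNp : ∀ i, i ∈ Np ↔ dev0 σ T f Xs i < 0)
    (hC : ∀ i, i ∈ C ↔ dev0 σ T f Xs i = 0)
    (h : Fin (d+1) → ℝ) :
    0 ≤ (∑ k, ((∑ i ∈ P, vvec σ T Xs i) - (∑ i ∈ Np, vvec σ T Xs i)) k * h k)
        + ∑ i ∈ C, |∑ k, vvec σ T Xs i k * h k| := by
  classical
  set u : Fin N → ℝ := fun i => (∑ k, Xs.2 k * T i k) + Xs.1 with hu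
  set c : Fin N → ℝ := fun i => (∑ j, h j.succ * T i j) + h 0 with hc
  set g : Fin N → ℝ → ℝ := fun i t => σ (u i + t * c i) - f i with hgdef
  set D : Fin N → ℝ := fun i => deriv σ (u i) * c i with hD
  have hg0 : ∀ i, g i 0 = dev0 σ T f Xs i := by
    intro i; simp [hgdef, dev0, hu]
  have hgd : ∀ i, HasDerivAt (g i) (D i) 0 := by
    intro i
    have h1 : HasDerivAt (fun t : ℝ => u i + t * c i) (c i) 0 := by
      simpa using ((hasDerivAt_id (0:ℝ)).mul_const (c i)).const_add (u i)
    have h2 : HasDerivAt σ (deriv σ (u i + 0 * c i)) (u i + 0 * c i) :=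
      ((hσ.differentiable one_ne_zero) _).hasDerivAt
    have h3 := (h2.comp 0 h1).sub_const (f i)
    simpa [hD, hgdef] using h3
  have hvdot : ∀ i, (∑ k, vvec σ T Xs i k * h k) = D i := by
    intro i
    have h1 : (∑ k, vvec σ T Xs i k * h k)
        = deriv σ (u i) * ∑ k : Fin (d+1), (Fin.cons 1 (T i) : Fin (d+1) → ℝ) k * h k := by
      rw [Finset.mul_sum]
      refine Finset.sum_congr rfl fun k _ => ?_
      simp [vvec, hu]; ring
    rw [h1, hD]
    congr 1
    rw [Fin.sum_univ_succ]
    simp only [Fin.cons_zero, Fin.cons_succ, one_mul, hc]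
    rw [add_comm]
    congr 1
    exact Finset.sum_congr rfl fun j _ => mul_comm _ _
  -- the path and the one-variable function
  set path : ℝ → ℝ × (Fin d → ℝ) :=
    fun t => (Xs.1 + t * h 0, fun k => Xs.2 k + t * h k.succ) with hpathdef
  have hp0 : path 0 = Xs := by
    simp only [hpathdef, zero_mul, add_zero]
  have hdev : ∀ t i, dev0 σ T f (path t) i = g i t := by
    intro t i
    have harg : (∑ k, (Xs.2 k + t * h k.succ) * T i k) + (Xs.1 + t * h 0)
        = u i + t * c i := by
      have hs : (∑ k, (Xs.2 k + t * h k.succ) * T i k)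
          = (∑ k, Xs.2 k * T i k) + t * ∑ j, h j.succ * T i j := by
        rw [Finset.mul_sum, ← Finset.sum_add_distrib]
        exact Finset.sum_congr rfl fun k _ => by ring
      rw [hu, hc]; rw [hs]; ring
    simp only [dev0, hpathdef, hgdef]
    rw [harg]
  set φ : ℝ → ℝ := fun t => ∑ i, |g i t| with hφdef
  have hφmin : IsMinFilter φ (𝓝 (0:ℝ)) 0 := by
    have hcont : ContinuousAt path 0 := by
      apply ContinuousAt.prodMk
      · fun_prop
      · exact continuousAt_pi.2 fun k => by fun_prop
    have h1 : IsMinFilter (manhattanLoss0 σ T f) (𝓝 Xs) (path 0) := hp0.symm ▸ hmin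
    have h2 := h1.comp_tendsto (hp0 ▸ hcont : Tendsto path (𝓝 0) (𝓝 Xs))
    have : (manhattanLoss0 σ T f ∘ path) = φ := by
      funext t; simp only [Function.comp, manhattanLoss0, hφdef, hdev]
    rwa [this] at h2
  set l : Fin N → ℝ := fun i => if i ∈ C then |D i| else if i ∈ P then D i else -D i with hl
  have hmono : 𝓝[>] (0:ℝ) ≤ 𝓝[≠] (0:ℝ) :=
    nhdsWithin_mono 0 fun x hx => (ne_of_gt hx : x ≠ 0)
  have hlim : ∀ i, Tendsto (fun t => (|g i t| - |g i 0|)/t) (𝓝[>] (0:ℝ)) (𝓝 (l i)) := by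
    intro i
    have hs : Tendsto (fun t => (g i t - g i 0)/t) (𝓝[≠] (0:ℝ)) (𝓝 (D i)) := by
      have h1 := hasDerivAt_iff_tendsto_slope.mp (hgd i)
      have h2 : slope (g i) 0 = fun t => (g i t - g i 0)/t := by
        funext t; rw [slope_def_field, sub_zero]
      rwa [h2] at h1
    have hs' : Tendsto (fun t => (g i t - g i 0)/t) (𝓝[>] (0:ℝ)) (𝓝 (D i)) :=
      hs.mono_left hmono
    rcases lt_trichotomy (dev0 σ T f Xs i) 0 with hneg | hzero | hpos
    · -- i ∈ Np
      have hiNp : i ∈ Np := (hNp i).2 hneg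
      have hiC : i ∉ C := by simp [hC, ne_of_lt hneg]
      have hiP : i ∉ P := by simp [hP, not_lt.2 hneg.le]
      have hg0neg : g i 0 < 0 := by rw [hg0]; exact hneg
      have hev : ∀ᶠ t in 𝓝 (0:ℝ), g i t < 0 :=
        (hgd i).continuousAt.eventually_lt_const hg0neg
      have := hs'.neg
      refine Tendsto.congr' ?_ (by rw [show l i = -D i by simp [hl, hiC, hiP]]; exact this)
      filter_upwards [hev.filter_mono nhdsWithin_le_nhds] with t ht
      rw [abs_of_neg ht, abs_of_neg hg0neg]
      ring
    · -- i ∈ C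
      have hiC : i ∈ C := (hC i).2 hzero
      have hg00 : g i 0 = 0 := by rw [hg0]; exact hzero
      have habs : Tendsto (fun t => |(g i t - g i 0)/t|) (𝓝[>] (0:ℝ)) (𝓝 |D i|) := hs'.abs
      refine Tendsto.congr' ?_ (by simpa [hl, hiC] using habs)
      filter_upwards [self_mem_nhdsWithin] with t ht
      simp [hg00, abs_div, abs_of_pos (show (0:ℝ) < t from ht)]
    · -- i ∈ P
      have hiP : i ∈ P := (hP i).2 hpos
      have hiC : i ∉ C := by simp [hC, ne_of_gt hpos]
      have hg0pos : 0 < g i 0 := by rw [hg0]; exact hpos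
      have hev : ∀ᶠ t in 𝓝 (0:ℝ), 0 < g i t :=
        (hgd i).continuousAt.eventually_const_lt hg0pos
      refine Tendsto.congr' ?_ (by simpa [hl, hiC, hiP] using hs')
      filter_upwards [hev.filter_mono nhdsWithin_le_nhds] with t ht
      rw [abs_of_pos ht, abs_of_pos hg0pos]
  have hsum : Tendsto (fun t => ∑ i, (|g i t| - |g i 0|)/t) (𝓝[>] (0:ℝ)) (𝓝 (∑ i, l i)) :=
    tendsto_finset_sum _ fun i _ => hlim i
  have hquot : ∀ t : ℝ, (φ t - φ 0)/t = ∑ i, (|g i t| - |g i 0|)/t := by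
    intro t
    rw [hφdef]
    simp only [← Finset.sum_div, ← Finset.sum_sub_distrib]
  have hnn : ∀ᶠ t in 𝓝[>] (0:ℝ), 0 ≤ ∑ i, (|g i t| - |g i 0|)/t := by
    have hev : ∀ᶠ t in 𝓝[>] (0:ℝ), φ 0 ≤ φ t :=
      (hφmin.filter_mono nhdsWithin_le_nhds : IsMinFilter φ (𝓝[>] 0) 0)
    filter_upwards [hev, self_mem_nhdsWithin] with t h1 h2
    rw [← hquot]
    exact div_nonneg (sub_nonneg.2 h1) (le_of_lt h2)
  have hL : 0 ≤ ∑ i, l i := ge_of_tendsto hsum hnn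
  -- decompose the sum
  have hPC : Disjoint P C := by
    rw [Finset.disjoint_left]; intro i hi hic
    exact absurd ((hC i).1 hic) (ne_of_gt ((hP i).1 hi))
  have hNpC : Disjoint Np C := by
    rw [Finset.disjoint_left]; intro i hi hic
    exact absurd ((hC i).1 hic) (ne_of_lt ((hNp i).1 hi))
  have hPNp : Disjoint P Np := by
    rw [Finset.disjoint_left]; intro i hi hic
    exact absurd ((hNp i).1 hic) (not_lt.2 (le_of_lt ((hP i).1 hi)))
  have huniv : P ∪ Np ∪ C = Finset.univ := by
    ext i
    simp only [Finset.mem_union, Finset.mem_univ, iff_true, hP, hNp, hC]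
    rcases lt_trichotomy (dev0 σ T f Xs i) 0 with hh | hh | hh
    · exact Or.inl (Or.inr hh)
    · exact Or.inr hh
    · exact Or.inl (Or.inl hh)
  have hsplit : ∑ i, l i = (∑ i ∈ P, D i) - (∑ i ∈ Np, D i) + ∑ i ∈ C, |D i| := by
    rw [← huniv, Finset.sum_union (Finset.disjoint_union_left.2 ⟨hPC, hNpC⟩),
      Finset.sum_union hPNp]
    have e1 : ∑ i ∈ P, l i = ∑ i ∈ P, D i := by
      refine Finset.sum_congr rfl fun i hi => ?_
      have hiC : i ∉ C := Finset.disjoint_left.1 hPC hi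
      simp [hl, hiC, hi]
    have e2 : ∑ i ∈ Np, l i = ∑ i ∈ Np, -D i := by
      refine Finset.sum_congr rfl fun i hi => ?_
      have hiC : i ∉ C := Finset.disjoint_left.1 hNpC hi
      have hiP : i ∉ P := fun hp => Finset.disjoint_left.1 hPNp hp hi
      simp [hl, hiC, hiP]
    have e3 : ∑ i ∈ C, l i = ∑ i ∈ C, |D i| := by
      refine Finset.sum_congr rfl fun i hi => ?_
      simp [hl, hi]
    rw [e1, e2, e3, Finset.sum_neg_distrib]
    ring
  have hA : ∀ Q : Finset (Fin N), (∑ k, (∑ i ∈ Q, vvec σ T Xs i) k * h k) = ∑ i ∈ Q, D i := by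
    intro Q
    calc (∑ k, (∑ i ∈ Q, vvec σ T Xs i) k * h k)
        = ∑ k, ∑ i ∈ Q, vvec σ T Xs i k * h k := by
          refine Finset.sum_congr rfl fun k _ => ?_
          rw [Finset.sum_apply, Finset.sum_mul]
      _ = ∑ i ∈ Q, ∑ k, vvec σ T Xs i k * h k := Finset.sum_comm
      _ = ∑ i ∈ Q, D i := Finset.sum_congr rfl fun i _ => hvdot i
  have hgoal1 : (∑ k, ((∑ i ∈ P, vvec σ T Xs i) - (∑ i ∈ Np, vvec σ T Xs i)) k * h k)
      = (∑ i ∈ P, D i) - ∑ i ∈ Np, D i := by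
    rw [← hA P, ← hA Np, ← Finset.sum_sub_distrib]
    refine Finset.sum_congr rfl fun k _ => ?_
    rw [Pi.sub_apply, sub_mul]
  have hgoal2 : ∑ i ∈ C, |∑ k, vvec σ T Xs i k * h k| = ∑ i ∈ C, |D i| :=
    Finset.sum_congr rfl fun i _ => by rw [hvdot i]
  rw [hgoal1, hgoal2]
  linarith [hL, hsplit.symm.le, hsplit.le]

/-- Necessary optimality condition for Manhattan (ℓ₁) loss approximation, no hidden layer:
if `X* = (w₀*, w*)` is a local minimizer of `G`, with `P`, `Np`, `C` the sets of indices
with positive, negative and zero deviation respectively, then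
`∑_{i∈P} vᵢ − ∑_{i∈Np} vᵢ` belongs to the Minkowski sum `Q = ∑_{i∈C} co{vᵢ, −vᵢ}`. -/
theorem manhattan_no_hidden_layer_necessary_condition (d N : ℕ) (hd : 0 < d) (hN : 0 < N)
    (σ : ℝ → ℝ) (hσ : ContDiff ℝ 1 σ) (T : Fin N → Fin d → ℝ) (f : Fin N → ℝ)
    (Xs : ℝ × (Fin d → ℝ))
    (hmin : IsLocalMin (manhattanLoss0 σ T f) Xs)
    (P Np C : Finset (Fin N))
    (hP : ∀ i, i ∈ P ↔ 0 < dev0 σ T f Xs i)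
    (hNp : ∀ i, i ∈ Np ↔ dev0 σ T f Xs i < 0)
    (hC : ∀ i, i ∈ C ↔ dev0 σ T f Xs i = 0) :
    (∑ i ∈ P, vvec σ T Xs i) - (∑ i ∈ Np, vvec σ T Xs i) ∈
      {x : Fin (d + 1) → ℝ | ∃ a : Fin N → Fin (d + 1) → ℝ,
        (∀ i ∈ C, a i ∈ convexHull ℝ {vvec σ T Xs i, -vvec σ T Xs i}) ∧
        x = ∑ i ∈ C, a i} := by
  classical
  by_contra hs
  set v : Fin N → Fin (d+1) → ℝ := vvec σ T Xs with hv
  set S : Fin N → Set (Fin (d+1) → ℝ) :=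
    fun i => if i ∈ C then convexHull ℝ {v i, -v i} else {0} with hS
  set K : Set (Fin N → Fin (d+1) → ℝ) := Set.univ.pi S with hK
  set Lm : (Fin N → Fin (d+1) → ℝ) →ₗ[ℝ] (Fin (d+1) → ℝ) :=
    ∑ i ∈ C, LinearMap.proj i with hLmdef
  have hLm : ∀ a, Lm a = ∑ i ∈ C, a i := by
    intro a
    rw [hLmdef]
    simp [LinearMap.sum_apply, LinearMap.proj_apply]
  have hQeq : {x : Fin (d + 1) → ℝ | ∃ a : Fin N → Fin (d + 1) → ℝ,
        (∀ i ∈ C, a i ∈ convexHull ℝ {v i, -v i}) ∧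
        x = ∑ i ∈ C, a i} = Lm '' K := by
    ext x
    constructor
    · rintro ⟨a, ha, rfl⟩
      refine ⟨fun i => if i ∈ C then a i else 0, fun i _ => ?_, ?_⟩
      · by_cases hi : i ∈ C
        · simpa only [hS, hi, if_true] using ha i hi
        · simp [hS, hi]
      · rw [hLm]
        exact (Finset.sum_congr rfl fun i hi => by simp [hi]).symm
    · rintro ⟨a, haK, rfl⟩
      refine ⟨a, fun i hi => ?_, hLm a⟩
      have := haK i (Set.mem_univ i)
      simpa [hS, hi] using this
  have hKconv : Convex ℝ K := by
    refine convex_pi fun i _ => ?_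
    rw [hS]
    dsimp only
    split_ifs
    · exact convex_convexHull ℝ _
    · exact convex_singleton 0
  have hKcomp : IsCompact K := by
    refine isCompact_univ_pi fun i => ?_
    rw [hS]
    dsimp only
    split_ifs
    · exact (Set.toFinite _).isCompact_convexHull ℝ
    · exact isCompact_singleton
  have hQconv : Convex ℝ (Lm '' K) := hKconv.linear_image Lm
  have hLmcont : Continuous Lm := Lm.continuous_of_finiteDimensional
  have hQclosed : IsClosed (Lm '' K) := (hKcomp.image hLmcont).isClosed
  rw [Set.mem_setOf_eq] at hs
  have hs' : ((∑ i ∈ P, v i) - ∑ i ∈ Np, v i) ∉ Lm '' K := by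
    rw [← hQeq]; exact hs
  obtain ⟨fl, uu, hQlt, hsu⟩ := geometric_hahn_banach_closed_point hQconv hQclosed hs'
  set hh : Fin (d+1) → ℝ := fun k => fl (Pi.single k (1:ℝ) : Fin (d+1) → ℝ) with hhdef
  have hrep : ∀ x : Fin (d+1) → ℝ, fl x = ∑ k, x k * hh k := by
    intro x
    have hx : x = ∑ k, x k • (Pi.single k (1:ℝ) : Fin (d+1) → ℝ) := by
      funext j
      simp [Finset.sum_apply, Pi.single_apply, Finset.sum_ite_eq, Finset.sum_ite_eq',
        mul_ite, mul_one, mul_zero]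
    conv_lhs => rw [hx]
    rw [map_sum]
    exact Finset.sum_congr rfl fun k _ => by rw [map_smul, smul_eq_mul, hhdef]
  have key := dirderiv_nonneg d N σ hσ T f Xs hmin P Np C hP hNp hC (fun k => -hh k)
  have h1 : (∑ k, ((∑ i ∈ P, v i) - ∑ i ∈ Np, v i) k * -hh k)
      = -fl ((∑ i ∈ P, v i) - ∑ i ∈ Np, v i) := by
    rw [hrep, ← Finset.sum_neg_distrib]
    exact Finset.sum_congr rfl fun k _ => by ring
  have h2 : ∀ i, |∑ k, v i k * -hh k| = |fl (v i)| := by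
    intro i
    have : (∑ k, v i k * -hh k) = -fl (v i) := by
      rw [hrep, ← Finset.sum_neg_distrib]
      exact Finset.sum_congr rfl fun k _ => by ring
    rw [this, abs_neg]
  rw [h1] at key
  have key2 : fl ((∑ i ∈ P, v i) - ∑ i ∈ Np, v i) ≤ ∑ i ∈ C, |fl (v i)| := by
    have : ∑ i ∈ C, |∑ k, v i k * -hh k| = ∑ i ∈ C, |fl (v i)| :=
      Finset.sum_congr rfl fun i _ => h2 i
    rw [this] at key
    linarith
  -- construct the maximizing point of Q
  set a : Fin N → Fin (d+1) → ℝ :=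
    fun i => if i ∈ C then (if 0 ≤ fl (v i) then v i else -v i) else 0 with ha
  have haK : a ∈ K := by
    intro i _
    rw [hS, ha]
    dsimp only
    by_cases hi : i ∈ C
    · simp only [hi, if_true]
      refine subset_convexHull ℝ _ ?_
      by_cases hf : 0 ≤ fl (v i)
      · simp [hf]
      · simp [hf]
    · simp [hi]
  have hlt := hQlt (Lm a) ⟨a, haK, rfl⟩
  have hfq : fl (Lm a) = ∑ i ∈ C, |fl (v i)| := by
    rw [hLm, map_sum]
    refine Finset.sum_congr rfl fun i hi => ?_
    rw [ha]
    dsimp only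
    rw [if_pos hi]
    by_cases hf : 0 ≤ fl (v i)
    · rw [if_pos hf, abs_of_nonneg hf]
    · rw [if_neg hf, map_neg, abs_of_neg (lt_of_not_ge hf)]
  rw [hfq] at hlt
  linarith
end

section
/- Let σ : ℝ → ℝ be continuously differentiable, fix discretisation points T_1, …, T_N ∈ ℝ^d and target values f_1, …, f_N ∈ ℝ, and for X = (a_1, …, a_n, w^1, …, w^n, w_0^1, …, w_0^n) set dev_i(X) = Σ_{j=1}^n a_j σ(w^j·T_i + w_0^j) − f_i and G(X) = Σ_{i=1}^N |dev_i(X)|. Suppose X* is a local minimizer of G, let P = {i : dev_i(X*) > 0}, N = {i : dev_i(X*) < 0}, C = {i : dev_i(X*) = 0}, and let V_i ∈ ℝ^{n(1+d)+n} be the vector whose j-th block (j = 1, …, n) is a_j* σ'(w^{j*}·T_i + w_0^{j*})·(1, T_i) and whose final n entries are σ(w^{1*}·T_i + w_0^{1*}), …, σ(w^{n*}·T_i + w_0^{n*}), all evaluated at X*. Then Σ_{i∈P} V_i − Σ_{i∈N} V_i belongs to the Minkowski sum Q = Σ_{i∈C} co{V_i, −V_i}. -/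
/-- The deviation at the `i`-th discretisation point for a neural network with one hidden
layer of `n` nodes, parameters `X = (a, w, w₀)`:
`dev_i(X) = ∑_{j=1}^n a_j σ(w^j ⬝ T_i + w₀^j) − f_i`. -/
noncomputable def dev {d N n : ℕ} (σ : ℝ → ℝ) (T : Fin N → Fin d → ℝ) (f : Fin N → ℝ)
    (X : (Fin n → ℝ) × (Fin n → Fin d → ℝ) × (Fin n → ℝ)) (i : Fin N) : ℝ :=
  (∑ j, X.1 j * σ ((∑ k, X.2.1 j k * T i k) + X.2.2 j)) - f i

/-- The Manhattan (ℓ₁) loss `G(X) = ∑_{i=1}^N |dev_i(X)|`. -/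
noncomputable def manhattanLoss {d N n : ℕ} (σ : ℝ → ℝ) (T : Fin N → Fin d → ℝ)
    (f : Fin N → ℝ) (X : (Fin n → ℝ) × (Fin n → Fin d → ℝ) × (Fin n → ℝ)) : ℝ :=
  ∑ i, |dev σ T f X i|

/-- The vector `V_i ∈ ℝ^{n(1+d)+n}` (realized as `(Fin n → Fin (d+1) → ℝ) × (Fin n → ℝ)`):
the `j`-th block is `a_j σ'(w^j ⬝ T_i + w₀^j) • (1, T_i) ∈ ℝ^{1+d}` and the final `n`
entries are `σ(w^1 ⬝ T_i + w₀^1), …, σ(w^n ⬝ T_i + w₀^n)`. -/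
noncomputable def Vvec {d N n : ℕ} (σ : ℝ → ℝ) (T : Fin N → Fin d → ℝ)
    (X : (Fin n → ℝ) × (Fin n → Fin d → ℝ) × (Fin n → ℝ)) (i : Fin N) :
    (Fin n → Fin (d + 1) → ℝ) × (Fin n → ℝ) :=
  (fun j => (X.1 j * deriv σ ((∑ k, X.2.1 j k * T i k) + X.2.2 j)) •
      (Fin.cons 1 (T i) : Fin (d + 1) → ℝ),
   fun j => σ ((∑ k, X.2.1 j k * T i k) + X.2.2 j))

section Aux

open Finset

/-- coordinate dot product on the gradient space -/
noncomputable def dotE {d n : ℕ} (u v : (Fin n → Fin (d + 1) → ℝ) × (Fin n → ℝ)) : ℝ :=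
  (∑ j, ∑ k, u.1 j k * v.1 j k) + ∑ j, u.2 j * v.2 j

lemma dotE_add_left {d n : ℕ} (u u' v : (Fin n → Fin (d + 1) → ℝ) × (Fin n → ℝ)) :
    dotE (u + u') v = dotE u v + dotE u' v := by
  simp [dotE, add_mul, Finset.sum_add_distrib]
  ring

lemma dotE_smul_left {d n : ℕ} (c : ℝ) (u v : (Fin n → Fin (d + 1) → ℝ) × (Fin n → ℝ)) :
    dotE (c • u) v = c * dotE u v := by
  simp [dotE, mul_add, Finset.mul_sum, mul_assoc]

/-- dotE as a linear map in the first argument -/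
noncomputable def dotL {d n : ℕ} (v : (Fin n → Fin (d + 1) → ℝ) × (Fin n → ℝ)) :
    ((Fin n → Fin (d + 1) → ℝ) × (Fin n → ℝ)) →ₗ[ℝ] ℝ where
  toFun u := dotE u v
  map_add' u u' := dotE_add_left u u' v
  map_smul' c u := dotE_smul_left c u v

lemma dotE_sum_left {d n : ℕ} {ι : Type*} (s : Finset ι)
    (g : ι → (Fin n → Fin (d + 1) → ℝ) × (Fin n → ℝ))
    (v : (Fin n → Fin (d + 1) → ℝ) × (Fin n → ℝ)) :
    dotE (∑ i ∈ s, g i) v = ∑ i ∈ s, dotE (g i) v :=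
  map_sum (dotL v) g s

lemma dotE_neg_left {d n : ℕ} (u v : (Fin n → Fin (d + 1) → ℝ) × (Fin n → ℝ)) :
    dotE (-u) v = -dotE u v := map_neg (dotL v) u

lemma dotE_sub_left {d n : ℕ} (u u' v : (Fin n → Fin (d + 1) → ℝ) × (Fin n → ℝ)) :
    dotE (u - u') v = dotE u v - dotE u' v := map_sub (dotL v) u u'

lemma dotE_neg_right {d n : ℕ} (u v : (Fin n → Fin (d + 1) → ℝ) × (Fin n → ℝ)) :
    dotE u (-v) = -dotE u v := by
  simp [dotE, mul_neg, Finset.sum_neg_distrib]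
  ring

/-- every continuous linear functional on the gradient space is represented by `dotE` -/
lemma exists_dotE_rep {d n : ℕ}
    (f : ((Fin n → Fin (d + 1) → ℝ) × (Fin n → ℝ)) →L[ℝ] ℝ) :
    ∃ h, ∀ v, f v = dotE v h := by
  refine ⟨((fun j k => f (Pi.single j (Pi.single k (1:ℝ)), 0)),
          fun j => f (0, Pi.single j (1:ℝ))), fun v => ?_⟩
  have hv : v = (∑ j, ∑ k, v.1 j k • ((Pi.single j (Pi.single k (1:ℝ)) :
        Fin n → Fin (d+1) → ℝ), (0 : Fin n → ℝ)))
      + ∑ j, v.2 j • ((0 : Fin n → Fin (d+1) → ℝ), (Pi.single j (1:ℝ) : Fin n → ℝ)) := by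
    apply Prod.ext
    · simp only [Prod.fst_add, Prod.fst_sum, Prod.smul_fst, Prod.snd_sum, smul_zero,
        Finset.sum_const_zero, add_zero]
      funext j' k'
      simp only [Finset.sum_apply, Pi.single_apply]
      simp [apply_ite (fun g : Fin (d+1) → ℝ => g k'), Finset.sum_apply,
        Pi.single_apply, Finset.sum_ite_eq, mul_ite, mul_zero, mul_one]
    · simp only [Prod.snd_add, Prod.snd_sum, Prod.smul_snd, Prod.fst_sum, smul_zero,
        Finset.sum_const_zero, zero_add]
      funext j'
      simp [Finset.sum_apply, Pi.single_apply]
  conv_lhs => rw [hv]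
  rw [map_add, map_sum, map_sum]
  simp only [map_sum, map_smul, smul_eq_mul]
  simp [dotE]

/-- identification of a direction in parameter space with a vector in gradient space -/
def PhiE {d n : ℕ} (h : (Fin n → ℝ) × (Fin n → Fin d → ℝ) × (Fin n → ℝ)) :
    (Fin n → Fin (d + 1) → ℝ) × (Fin n → ℝ) :=
  ((fun j => Fin.cons (h.2.2 j) (h.2.1 j)), h.1)

lemma PhiE_surjective {d n : ℕ} : Function.Surjective (PhiE (d := d) (n := n)) := by
  intro v
  refine ⟨(v.2, fun j => Fin.tail (v.1 j), fun j => v.1 j 0), ?_⟩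
  unfold PhiE
  refine Prod.ext ?_ rfl
  funext j
  exact Fin.cons_self_tail (v.1 j)

lemma hasDerivAt_dev_line {d N n : ℕ} (σ : ℝ → ℝ) (hσ : ContDiff ℝ 1 σ)
    (T : Fin N → Fin d → ℝ) (f : Fin N → ℝ)
    (Xs h : (Fin n → ℝ) × (Fin n → Fin d → ℝ) × (Fin n → ℝ)) (i : Fin N) :
    HasDerivAt (fun t : ℝ => dev σ T f (Xs + t • h) i)
      (dotE (Vvec σ T Xs i) (PhiE h)) 0 := by
  have hσd : Differentiable ℝ σ := hσ.differentiable one_ne_zero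
  set s : Fin n → ℝ := fun j => (∑ k, Xs.2.1 j k * T i k) + Xs.2.2 j with hs
  set m : Fin n → ℝ := fun j => (∑ k, h.2.1 j k * T i k) + h.2.2 j with hm
  have key : HasDerivAt (fun t : ℝ => (∑ j, (Xs.1 j + t * h.1 j) * σ (s j + t * m j)) - f i)
      (∑ j, (h.1 j * σ (s j) + Xs.1 j * (deriv σ (s j) * m j))) 0 := by
    apply HasDerivAt.sub_const
    apply HasDerivAt.fun_sum
    intro j _
    have h1 : HasDerivAt (fun t : ℝ => Xs.1 j + t * h.1 j) (h.1 j) 0 := by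
      simpa using ((hasDerivAt_id (0:ℝ)).mul_const (h.1 j)).const_add (Xs.1 j)
    have h2 : HasDerivAt (fun t : ℝ => s j + t * m j) (m j) 0 := by
      simpa using ((hasDerivAt_id (0:ℝ)).mul_const (m j)).const_add (s j)
    have h3 : HasDerivAt σ (deriv σ (s j)) ((fun t : ℝ => s j + t * m j) 0) := by
      simpa using (hσd (s j)).hasDerivAt
    have h4 : HasDerivAt (fun t : ℝ => σ (s j + t * m j)) (deriv σ (s j) * m j) 0 :=
      HasDerivAt.comp 0 h3 h2
    simpa using h1.fun_mul h4
  have hfun : (fun t : ℝ => dev σ T f (Xs + t • h) i)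
      = fun t : ℝ => (∑ j, (Xs.1 j + t * h.1 j) * σ (s j + t * m j)) - f i := by
    funext t
    simp only [dev, hs, hm, Prod.fst_add, Prod.snd_add, Prod.smul_fst, Prod.smul_snd,
      Pi.add_apply, Pi.smul_apply, smul_eq_mul]
    congr 1
    apply Finset.sum_congr rfl
    intro j _
    congr 1
    congr 1
    simp only [add_mul, Finset.sum_add_distrib, Finset.mul_sum]
    ring_nf
    rw [Finset.mul_sum]
    ring_nf
  have hval : dotE (Vvec σ T Xs i) (PhiE h)
      = ∑ j, (h.1 j * σ (s j) + Xs.1 j * (deriv σ (s j) * m j)) := by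
    simp only [dotE, Vvec, PhiE, Pi.smul_apply, smul_eq_mul, Fin.sum_univ_succ,
      Fin.cons_zero, Fin.cons_succ, hs, hm]
    rw [← Finset.sum_add_distrib]
    apply Finset.sum_congr rfl
    intro j _
    have hsum : (∑ x : Fin d, Xs.1 j * deriv σ ((∑ k, Xs.2.1 j k * T i k) + Xs.2.2 j)
          * T i x * h.2.1 j x)
        = Xs.1 j * deriv σ ((∑ k, Xs.2.1 j k * T i k) + Xs.2.2 j)
          * ∑ k, h.2.1 j k * T i k := by
      rw [Finset.mul_sum]; exact Finset.sum_congr rfl fun x _ => by ring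
    rw [hsum]
    ring
  rw [hfun, hval]
  exact key

end Aux

/-- Necessary optimality condition for Manhattan (ℓ₁) loss approximation, one hidden
layer: if `X*` is a local minimizer of `G`, with `P`, `Np`, `C` the sets of indices with
positive, negative and zero deviation respectively, then
`∑_{i∈P} Vᵢ − ∑_{i∈Np} Vᵢ` belongs to the Minkowski sum `Q = ∑_{i∈C} co{Vᵢ, −Vᵢ}`. -/
theorem manhattan_one_hidden_layer_necessary_condition (d N n : ℕ) (hd : 0 < d) (hN : 0 < N)
    (hn : 0 < n) (σ : ℝ → ℝ) (hσ : ContDiff ℝ 1 σ) (T : Fin N → Fin d → ℝ) (f : Fin N → ℝ)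
    (Xs : (Fin n → ℝ) × (Fin n → Fin d → ℝ) × (Fin n → ℝ))
    (hmin : IsLocalMin (manhattanLoss σ T f) Xs)
    (P Np C : Finset (Fin N))
    (hP : ∀ i, i ∈ P ↔ 0 < dev σ T f Xs i)
    (hNp : ∀ i, i ∈ Np ↔ dev σ T f Xs i < 0)
    (hC : ∀ i, i ∈ C ↔ dev σ T f Xs i = 0) :
    (∑ i ∈ P, Vvec σ T Xs i) - (∑ i ∈ Np, Vvec σ T Xs i) ∈
      {x : (Fin n → Fin (d + 1) → ℝ) × (Fin n → ℝ) |
        ∃ a : Fin N → (Fin n → Fin (d + 1) → ℝ) × (Fin n → ℝ),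
          (∀ i ∈ C, a i ∈ convexHull ℝ {Vvec σ T Xs i, -Vvec σ T Xs i}) ∧
          x = ∑ i ∈ C, a i} := by
  classical
  set E := (Fin n → Fin (d + 1) → ℝ) × (Fin n → ℝ)
  set V : Fin N → E := fun i => Vvec σ T Xs i with hV
  set W0 : E := (∑ i ∈ P, V i) - ∑ i ∈ Np, V i with hW0
  -- Step 1: the directional-derivative inequality
  have step1 : ∀ h : (Fin n → ℝ) × (Fin n → Fin d → ℝ) × (Fin n → ℝ),
      0 ≤ (∑ i ∈ P, dotE (V i) (PhiE h)) - (∑ i ∈ Np, dotE (V i) (PhiE h))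
        + ∑ i ∈ C, |dotE (V i) (PhiE h)| := by
    intro h
    set c : Fin N → ℝ := fun i => dotE (V i) (PhiE h) with hc
    set g : Fin N → ℝ → ℝ := fun i t => dev σ T f (Xs + t • h) i with hgdef
    have hg : ∀ i, HasDerivAt (g i) (c i) 0 := fun i => hasDerivAt_dev_line σ hσ T f Xs h i
    have hg0 : ∀ i, g i 0 = dev σ T f Xs i := by
      intro i; simp [hgdef]
    set dd : Fin N → ℝ := fun i =>
      if dev σ T f Xs i = 0 then |c i| else if 0 < dev σ T f Xs i then c i else -(c i)
      with hdd
    set q : Fin N → ℝ → ℝ := fun i t => (|g i t| - |g i 0|) / t with hq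
    have hIoi : Set.Ioi (0:ℝ) ⊆ {(0:ℝ)}ᶜ := fun x hx => ne_of_gt hx
    have hslope : ∀ i, Filter.Tendsto (fun t : ℝ => (g i t - g i 0) / t)
        (nhdsWithin 0 (Set.Ioi 0)) (nhds (c i)) := by
      intro i
      have := (hasDerivAt_iff_tendsto_slope.mp (hg i)).mono_left
        (nhdsWithin_mono 0 hIoi)
      refine this.congr' ?_
      filter_upwards [self_mem_nhdsWithin] with t ht
      simp [slope_def_field]
    have stepA : ∀ i, Filter.Tendsto (q i) (nhdsWithin 0 (Set.Ioi 0)) (nhds (dd i)) := by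
      intro i
      rcases lt_trichotomy (dev σ T f Xs i) 0 with hlt | hzero | hgt
      · -- negative deviation
        have hcont : Filter.Tendsto (g i) (nhds 0) (nhds (g i 0)) := (hg i).continuousAt
        have h0' : g i 0 < 0 := by rw [hg0]; exact hlt
        have hev : ∀ᶠ t in nhds (0:ℝ), g i t < 0 :=
          hcont.eventually (eventually_lt_nhds h0')
        have hev' : ∀ᶠ t in nhdsWithin (0:ℝ) (Set.Ioi 0), g i t < 0 :=
          hev.filter_mono nhdsWithin_le_nhds
        have hdd' : dd i = -(c i) := by
          simp [hdd, ne_of_lt hlt, not_lt.mpr (le_of_lt hlt)]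
        rw [hdd']
        refine ((hslope i).neg).congr' ?_
        filter_upwards [hev'] with t ht
        have h0 : g i 0 < 0 := by rw [hg0]; exact hlt
        simp [hq, abs_of_neg ht, abs_of_neg h0]
        ring
      · -- zero deviation
        have hdd' : dd i = |c i| := by simp [hdd, hzero]
        rw [hdd']
        refine ((hslope i).abs).congr' ?_
        filter_upwards [self_mem_nhdsWithin] with t ht
        have h0 : g i 0 = 0 := by rw [hg0]; exact hzero
        rw [hq]
        simp only [h0, abs_zero, sub_zero]
        rw [abs_div, abs_of_pos (show (0:ℝ) < t from ht)]
      · -- positive deviation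
        have hcont : Filter.Tendsto (g i) (nhds 0) (nhds (g i 0)) := (hg i).continuousAt
        have h0' : 0 < g i 0 := by rw [hg0]; exact hgt
        have hev : ∀ᶠ t in nhds (0:ℝ), 0 < g i t :=
          hcont.eventually (eventually_gt_nhds h0')
        have hev' : ∀ᶠ t in nhdsWithin (0:ℝ) (Set.Ioi 0), 0 < g i t :=
          hev.filter_mono nhdsWithin_le_nhds
        have hdd' : dd i = c i := by
          simp [hdd, (ne_of_gt hgt), hgt]
        rw [hdd']
        refine (hslope i).congr' ?_
        filter_upwards [hev'] with t ht
        have h0 : 0 < g i 0 := by rw [hg0]; exact hgt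
        simp [hq, abs_of_pos ht, abs_of_pos h0]
    have stepB : Filter.Tendsto (fun t => ∑ i, q i t) (nhdsWithin 0 (Set.Ioi 0))
        (nhds (∑ i, dd i)) := tendsto_finset_sum _ fun i _ => stepA i
    have stepC : ∀ᶠ t in nhdsWithin 0 (Set.Ioi 0), 0 ≤ ∑ i, q i t := by
      have hcontline : Continuous (fun t : ℝ => Xs + t • h) :=
        continuous_const.add (continuous_id.smul continuous_const)
      have htend : Filter.Tendsto (fun t : ℝ => Xs + t • h) (nhds 0) (nhds Xs) := by
        simpa using hcontline.tendsto 0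
      have hev : ∀ᶠ t in nhds (0:ℝ),
          manhattanLoss σ T f Xs ≤ manhattanLoss σ T f (Xs + t • h) :=
        htend.eventually hmin
      have hev' : ∀ᶠ t in nhdsWithin (0:ℝ) (Set.Ioi 0),
          manhattanLoss σ T f Xs ≤ manhattanLoss σ T f (Xs + t • h) :=
        hev.filter_mono nhdsWithin_le_nhds
      filter_upwards [hev', self_mem_nhdsWithin] with t hle ht
      have hsum : ∑ i, q i t
          = ((∑ i, |g i t|) - ∑ i, |g i 0|) / t := by
        rw [← Finset.sum_sub_distrib, Finset.sum_div]
      rw [hsum]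
      apply div_nonneg _ (le_of_lt ht)
      rw [sub_nonneg]
      have e1 : manhattanLoss σ T f (Xs + t • h) = ∑ i, |g i t| := rfl
      have e2 : manhattanLoss σ T f Xs = ∑ i, |g i 0| := by
        unfold manhattanLoss
        exact Finset.sum_congr rfl fun i _ => by rw [hg0]
      rw [← e1, ← e2]
      exact hle
    have stepD : 0 ≤ ∑ i, dd i := ge_of_tendsto stepB stepC
    -- partition the sum
    have hdisj1 : Disjoint P Np := by
      rw [Finset.disjoint_left]
      intro i hi hi'
      exact absurd ((hNp i).mp hi') (not_lt.mpr (le_of_lt ((hP i).mp hi)))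
    have hdisj2 : Disjoint (P ∪ Np) C := by
      rw [Finset.disjoint_left]
      intro i hi hi'
      have hz := (hC i).mp hi'
      rcases Finset.mem_union.mp hi with h' | h'
      · exact absurd hz (ne_of_gt ((hP i).mp h'))
      · exact absurd hz (ne_of_lt ((hNp i).mp h'))
    have hunion : P ∪ Np ∪ C = Finset.univ := by
      ext i
      simp only [Finset.mem_union, Finset.mem_univ, iff_true, hP, hNp, hC]
      rcases lt_trichotomy (dev σ T f Xs i) 0 with h' | h' | h'
      · exact Or.inl (Or.inr h')
      · exact Or.inr h'
      · exact Or.inl (Or.inl h')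
    have hsplit : ∑ i, dd i = (∑ i ∈ P, dd i) + (∑ i ∈ Np, dd i) + ∑ i ∈ C, dd i := by
      rw [← hunion, Finset.sum_union hdisj2, Finset.sum_union hdisj1]
    have hPdd : ∀ i ∈ P, dd i = c i := by
      intro i hi
      have := (hP i).mp hi
      simp [hdd, ne_of_gt this, this]
    have hNpdd : ∀ i ∈ Np, dd i = -(c i) := by
      intro i hi
      have := (hNp i).mp hi
      simp [hdd, ne_of_lt this, not_lt.mpr (le_of_lt this)]
    have hCdd : ∀ i ∈ C, dd i = |c i| := by
      intro i hi
      simp [hdd, (hC i).mp hi]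
    rw [hsplit, Finset.sum_congr rfl hPdd, Finset.sum_congr rfl hNpdd,
      Finset.sum_congr rfl hCdd, Finset.sum_neg_distrib] at stepD
    linarith [stepD]
  -- Step 2: reformulate with dotE and arbitrary second argument
  have step2 : ∀ v : E, dotE W0 v ≤ ∑ i ∈ C, |dotE (V i) v| := by
    intro v
    obtain ⟨h, hPhi⟩ := PhiE_surjective (-v)
    have hv : v = -PhiE h := by rw [hPhi, neg_neg]
    rw [hv]
    have h1 := step1 h
    have hWc : dotE W0 (PhiE h) = (∑ i ∈ P, dotE (V i) (PhiE h))
        - ∑ i ∈ Np, dotE (V i) (PhiE h) := by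
      rw [hW0, dotE_sub_left, dotE_sum_left, dotE_sum_left]
    have hneg : dotE W0 (-PhiE h) = -dotE W0 (PhiE h) := dotE_neg_right _ _
    rw [hneg, hWc]
    have habs : ∀ i, |dotE (V i) (-PhiE h)| = |dotE (V i) (PhiE h)| := by
      intro i; rw [dotE_neg_right, abs_neg]
    rw [Finset.sum_congr rfl fun i _ => habs i]
    linarith [h1]
  -- Step 3: the Minkowski sum is a compact convex set
  set K : Set E := {x : E | ∃ a : Fin N → E,
      (∀ i ∈ C, a i ∈ convexHull ℝ {V i, -V i}) ∧ x = ∑ i ∈ C, a i} with hK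
  set S : Set (Fin N → E) := Set.pi Set.univ
      (fun i => if i ∈ C then convexHull ℝ {V i, -V i} else {0}) with hS
  set L : (Fin N → E) →L[ℝ] E := ∑ i ∈ C, ContinuousLinearMap.proj i with hL
  have hLapply : ∀ a : Fin N → E, L a = ∑ i ∈ C, a i := by
    intro a
    rw [hL]
    simp [ContinuousLinearMap.sum_apply]
  have hKimage : K = L '' S := by
    ext x
    constructor
    · rintro ⟨a, ha, rfl⟩
      refine ⟨fun i => if i ∈ C then a i else 0, ?_, ?_⟩
      · intro i _
        by_cases hi : i ∈ C
        · simpa [hi] using ha i hi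
        · simp [hi]
      · rw [hLapply]
        exact Finset.sum_congr rfl fun i hi => by simp [hi]
    · rintro ⟨a, ha, rfl⟩
      refine ⟨a, fun i hi => ?_, (hLapply a)⟩
      have := ha i (Set.mem_univ i)
      simpa [hi] using this
    -- end ext
  have hScompact : IsCompact S := by
    apply isCompact_univ_pi
    intro i
    by_cases hi : i ∈ C
    · simp only [hi, if_true]
      exact Set.Finite.isCompact_convexHull ℝ ((Set.finite_singleton _).insert _)
    · simp only [hi, if_false]
      exact isCompact_singleton
  have hSconvex : Convex ℝ S := by
    apply convex_pi
    intro i _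
    by_cases hi : i ∈ C
    · simp only [hi, if_true]; exact convex_convexHull ℝ _
    · simp only [hi, if_false]; exact convex_singleton 0
  have hKcompact : IsCompact K := by
    rw [hKimage]; exact hScompact.image L.continuous
  have hKconvex : Convex ℝ K := by
    rw [hKimage]
    exact hSconvex.is_linear_image ⟨fun x y => map_add L x y, fun c x => map_smul L c x⟩
  -- Step 4: separation
  by_contra hnotin
  obtain ⟨F, u, hFb, hFx⟩ := geometric_hahn_banach_closed_point hKconvex
    hKcompact.isClosed hnotin
  obtain ⟨hrep, hrepF⟩ := exists_dotE_rep F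
  -- the maximizing element of K
  set b : Fin N → E := fun i => if 0 ≤ dotE (V i) hrep then V i else -V i with hb
  have hbK : (∑ i ∈ C, b i) ∈ K := by
    refine ⟨b, fun i _ => ?_, rfl⟩
    by_cases hsign : 0 ≤ dotE (V i) hrep
    · simp only [hb, hsign, if_true]
      exact subset_convexHull ℝ _ (by simp)
    · simp only [hb, hsign, if_false]
      exact subset_convexHull ℝ _ (by simp)
  have hFb' : F (∑ i ∈ C, b i) = ∑ i ∈ C, |dotE (V i) hrep| := by
    rw [hrepF, dotE_sum_left]
    apply Finset.sum_congr rfl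
    intro i _
    by_cases hsign : 0 ≤ dotE (V i) hrep
    · simp only [hb, hsign, if_true]
      exact (abs_of_nonneg hsign).symm
    · simp only [hb, hsign, if_false]
      rw [dotE_neg_left, abs_of_neg (not_le.mp hsign)]
  have h1 := hFb _ hbK
  have h2 := step2 hrep
  rw [hrepF] at hFx
  rw [hFb'] at h1
  linarith
end

section
/- Let σ : ℝ → ℝ be continuously differentiable, fix discretisation points T_1, …, T_N ∈ ℝ^d and target values f_1, …, f_N ∈ ℝ, and for X = (w_0, w) ∈ ℝ × ℝ^d set dev_i(X) = σ(w·T_i + w_0) − f_i and G(X) = Σ_{i=1}^N |dev_i(X)|. Suppose X* = (w_0*, w*) is a local minimizer of G and dev_i(X*) ≠ 0 for every i = 1, …, N. Then, with P = {i : dev_i(X*) > 0}, N = {i : dev_i(X*) < 0}, and v_i = σ'(w*·T_i + w_0*)·(1, T_i) ∈ ℝ^{1+d}, it holds that Σ_{i∈P} v_i = Σ_{i∈N} v_i. -/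
/-- Simplified necessary optimality condition for Manhattan (ℓ₁) loss approximation, no
hidden layer, when no discretisation point has zero deviation: if `X* = (w₀*, w*)` is a
local minimizer of `G` and `dev_i(X*) ≠ 0` for all `i`, then with `P` and `Np` the sets of
indices of positive resp. negative deviation, `∑_{i∈P} vᵢ = ∑_{i∈Np} vᵢ`. -/
theorem manhattan_no_hidden_layer_no_zero_deviation (d N : ℕ) (hd : 0 < d) (hN : 0 < N)
    (σ : ℝ → ℝ) (hσ : ContDiff ℝ 1 σ) (T : Fin N → Fin d → ℝ) (f : Fin N → ℝ)
    (Xs : ℝ × (Fin d → ℝ))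
    (hmin : IsLocalMin (manhattanLoss0 σ T f) Xs)
    (hne : ∀ i, dev0 σ T f Xs i ≠ 0)
    (P Np : Finset (Fin N))
    (hP : ∀ i, i ∈ P ↔ 0 < dev0 σ T f Xs i)
    (hNp : ∀ i, i ∈ Np ↔ dev0 σ T f Xs i < 0) :
    (∑ i ∈ P, vvec σ T Xs i) = ∑ i ∈ Np, vvec σ T Xs i := by
  classical
  set c : Fin N → ℝ := fun i => deriv σ ((∑ k, Xs.2 k * T i k) + Xs.1) with hc
  set s : Fin N → ℝ := fun i => if 0 < dev0 σ T f Xs i then 1 else -1 with hs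
  set A : Fin N → (ℝ × (Fin d → ℝ)) →L[ℝ] ℝ := fun i =>
    (∑ k, T i k • ((ContinuousLinearMap.proj k : (Fin d → ℝ) →L[ℝ] ℝ).comp
      (ContinuousLinearMap.snd ℝ ℝ (Fin d → ℝ)))) + ContinuousLinearMap.fst ℝ ℝ (Fin d → ℝ)
    with hA
  -- derivative of each deviation
  have hdev : ∀ i, HasFDerivAt (fun X => dev0 σ T f X i) (c i • A i) Xs := by
    intro i
    have hinner : HasFDerivAt (fun X : ℝ × (Fin d → ℝ) => (∑ k, X.2 k * T i k) + X.1) (A i) Xs := by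
      refine HasFDerivAt.add ?_ (hasFDerivAt_fst)
      refine HasFDerivAt.fun_sum fun k _ => ?_
      have h1 : HasFDerivAt (fun X : ℝ × (Fin d → ℝ) => X.2 k)
          ((ContinuousLinearMap.proj k : (Fin d → ℝ) →L[ℝ] ℝ).comp
            (ContinuousLinearMap.snd ℝ ℝ (Fin d → ℝ))) Xs :=
        ((ContinuousLinearMap.proj k : (Fin d → ℝ) →L[ℝ] ℝ).hasFDerivAt).comp Xs hasFDerivAt_snd
      exact h1.mul_const (T i k)
    have hσd : HasDerivAt σ (c i) ((∑ k, Xs.2 k * T i k) + Xs.1) :=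
      ((hσ.differentiable one_ne_zero) _).hasDerivAt
    simpa [dev0] using (hσd.comp_hasFDerivAt Xs hinner).sub_const (f i)
  -- derivative of the smooth surrogate
  have htot : HasFDerivAt (fun X => ∑ i, s i * dev0 σ T f X i)
      (∑ i, s i • (c i • A i)) Xs := by
    refine HasFDerivAt.fun_sum fun i _ => ?_
    simpa [smul_eq_mul] using (hdev i).fun_const_smul (s i)
  -- the loss eventually equals the surrogate
  have hcont : ∀ i, ContinuousAt (fun X => dev0 σ T f X i) Xs := by
    intro i
    have : Continuous (fun X : ℝ × (Fin d → ℝ) => dev0 σ T f X i) := by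
      unfold dev0
      exact ((hσ.continuous).comp
        ((continuous_finset_sum _ fun k _ =>
          ((continuous_apply k).comp continuous_snd).mul continuous_const).add
          continuous_fst)).sub continuous_const
    exact this.continuousAt
  have hev : (manhattanLoss0 σ T f) =ᶠ[nhds Xs] (fun X => ∑ i, s i * dev0 σ T f X i) := by
    have h1 : ∀ᶠ X in nhds Xs, ∀ i, |dev0 σ T f X i| = s i * dev0 σ T f X i := by
      rw [Filter.eventually_all]
      intro i
      rcases lt_or_gt_of_ne (hne i) with hneg | hpos
      · have := (hcont i).eventually_lt_const hneg
        filter_upwards [this] with X hX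
        rw [abs_of_neg hX, hs]
        simp [not_lt.mpr (le_of_lt (by simpa using hneg))]
      · have := (hcont i).eventually_const_lt hpos
        filter_upwards [this] with X hX
        rw [abs_of_pos hX, hs]
        simp [hpos]
    filter_upwards [h1] with X hX
    unfold manhattanLoss0
    exact Finset.sum_congr rfl fun i _ => hX i
  have hG : HasFDerivAt (manhattanLoss0 σ T f) (∑ i, s i • (c i • A i)) Xs :=
    htot.congr_of_eventuallyEq hev
  have hzero : (∑ i, s i • (c i • A i)) = 0 := hmin.hasFDerivAt_eq_zero hG
  -- key identity
  have key : ∀ e : ℝ × (Fin d → ℝ), ∑ i, s i * (c i * ((∑ k, T i k * e.2 k) + e.1)) = 0 := by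
    intro e
    have := congrFun (congrArg DFunLike.coe hzero) e
    simpa [hA, ContinuousLinearMap.sum_apply, smul_eq_mul, mul_add] using this
  -- partition
  have hdisj : Disjoint P Np := by
    rw [Finset.disjoint_left]
    intro i hiP hiN
    exact absurd ((hP i).mp hiP) (not_lt.mpr (le_of_lt ((hNp i).mp hiN)))
  have hunion : P ∪ Np = Finset.univ := by
    ext i
    simp only [Finset.mem_union, Finset.mem_univ, iff_true, hP, hNp]
    rcases lt_or_gt_of_ne (hne i) with h | h
    · exact Or.inr h
    · exact Or.inl h
  have hsplit : ∀ w : Fin N → ℝ, (∑ i, s i * w i) = (∑ i ∈ P, w i) - ∑ i ∈ Np, w i := by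
    intro w
    rw [← hunion, Finset.sum_union hdisj]
    have e1 : ∀ i ∈ P, s i * w i = w i := fun i hi => by
      rw [hs]; simp [(hP i).mp hi]
    have e2 : ∀ i ∈ Np, s i * w i = -w i := fun i hi => by
      rw [hs]; simp [not_lt.mpr (le_of_lt ((hNp i).mp hi))]
    rw [Finset.sum_congr rfl e1, Finset.sum_congr rfl e2, Finset.sum_neg_distrib]
    ring
  funext j
  refine Fin.cases ?_ ?_ j
  · -- component 0
    have h0 := key (1, 0)
    simp only [Prod.fst, Prod.snd, Pi.zero_apply, mul_zero, Finset.sum_const_zero, zero_add,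
      mul_one] at h0
    rw [hsplit c] at h0
    have : (∑ i ∈ P, c i) = ∑ i ∈ Np, c i := by linarith
    simpa [vvec, Finset.sum_apply, hc] using this
  · -- component succ k
    intro k
    have h0 := key (0, Pi.single k 1)
    have hw : ∀ i, (∑ j, T i j * (Pi.single k 1 : Fin d → ℝ) j) = T i k := by
      intro i
      simp [Pi.single_apply, mul_ite, Finset.sum_ite_eq']
    simp only [Prod.fst, Prod.snd, add_zero] at h0
    rw [Finset.sum_congr rfl (fun i _ => by rw [hw i])] at h0
    rw [hsplit (fun i => c i * T i k)] at h0
    have : (∑ i ∈ P, c i * T i k) = ∑ i ∈ Np, c i * T i k := by linarith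
    simpa [vvec, Finset.sum_apply, hc] using this
end

section
/- Let σ : ℝ → ℝ be continuously differentiable, fix discretisation points T_1, …, T_N ∈ ℝ^d and target values f_1, …, f_N ∈ ℝ, and for X = (a_1, …, a_n, w^1, …, w^n, w_0^1, …, w_0^n) set dev_i(X) = Σ_{j=1}^n a_j σ(w^j·T_i + w_0^j) − f_i and G(X) = Σ_{i=1}^N |dev_i(X)|. Suppose X* is a local minimizer of G and dev_i(X*) ≠ 0 for every i = 1, …, N. Then, with P = {i : dev_i(X*) > 0}, N = {i : dev_i(X*) < 0}, and V_i ∈ ℝ^{n(1+d)+n} the vector whose j-th block (j = 1, …, n) is a_j* σ'(w^{j*}·T_i + w_0^{j*})·(1, T_i) and whose final n entries are σ(w^{1*}·T_i + w_0^{1*}), …, σ(w^{n*}·T_i + w_0^{n*}), all evaluated at X*, it holds that Σ_{i∈P} V_i = Σ_{i∈N} V_i. -/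
lemma devHasDerivAt {d N n : ℕ} (σ : ℝ → ℝ) (hσ : ContDiff ℝ 1 σ)
    (T : Fin N → Fin d → ℝ) (f : Fin N → ℝ)
    (A : Fin n → ℝ) (W : Fin n → Fin d → ℝ) (B : Fin n → ℝ)
    (e1 : Fin n → ℝ) (e2 : Fin n → Fin d → ℝ) (e3 : Fin n → ℝ) (i : Fin N) :
    HasDerivAt (fun t : ℝ => dev σ T f (fun j => A j + t * e1 j,
        fun j k => W j k + t * e2 j k, fun j => B j + t * e3 j) i)
      (∑ j, (e1 j * σ ((∑ k, W j k * T i k) + B j) +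
        A j * (deriv σ ((∑ k, W j k * T i k) + B j) * ((∑ k, e2 j k * T i k) + e3 j)))) 0 := by
  have hσd : Differentiable ℝ σ := hσ.differentiable one_ne_zero
  simp only [dev]
  apply HasDerivAt.sub_const
  apply HasDerivAt.fun_sum
  intro j _
  set z := (∑ k, W j k * T i k) + B j with hz
  set c := (∑ k, e2 j k * T i k) + e3 j with hc
  have harg : ∀ t : ℝ, ((∑ k, (W j k + t * e2 j k) * T i k) + (B j + t * e3 j)) = z + t * c := by
    intro t
    have hs : ∑ k, (W j k + t * e2 j k) * T i k
        = (∑ k, W j k * T i k) + t * ∑ k, e2 j k * T i k := by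
      rw [Finset.mul_sum, ← Finset.sum_add_distrib]
      exact Finset.sum_congr rfl fun k _ => by ring
    rw [hs, hz, hc]; ring
  have hu : HasDerivAt (fun t : ℝ => z + t * c) c 0 := by
    simpa using ((hasDerivAt_id (0:ℝ)).mul_const c).const_add z
  have hcomp : HasDerivAt (fun t : ℝ => σ (z + t * c)) (deriv σ z * c) 0 := by
    have h := (hσd (z + 0 * c)).hasDerivAt.comp 0 hu
    simp only [zero_mul, add_zero] at h
    exact h
  have hlin : HasDerivAt (fun t : ℝ => A j + t * e1 j) (e1 j) 0 := by
    simpa using ((hasDerivAt_id (0:ℝ)).mul_const (e1 j)).const_add (A j)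
  have hmul := hlin.fun_mul hcomp
  simp only [harg]
  simp only [zero_mul, add_zero] at hmul
  exact hmul


lemma key {d N n : ℕ} (σ : ℝ → ℝ) (T : Fin N → Fin d → ℝ) (f : Fin N → ℝ)
    (Xs : (Fin n → ℝ) × (Fin n → Fin d → ℝ) × (Fin n → ℝ))
    (hmin : IsLocalMin (manhattanLoss σ T f) Xs)
    (hne : ∀ i, dev σ T f Xs i ≠ 0)
    (P Np : Finset (Fin N)) (hP : ∀ i, i ∈ P ↔ 0 < dev σ T f Xs i)
    (hNp : ∀ i, i ∈ Np ↔ dev σ T f Xs i < 0)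
    (γ : ℝ → (Fin n → ℝ) × (Fin n → Fin d → ℝ) × (Fin n → ℝ))
    (hγ0 : γ 0 = Xs) (hγc : ContinuousAt γ 0) (D : Fin N → ℝ)
    (hD : ∀ i, HasDerivAt (fun t => dev σ T f (γ t) i) (D i) 0) :
    ∑ i ∈ P, D i = ∑ i ∈ Np, D i := by
  set s : Fin N → ℝ := fun i => if 0 < dev σ T f Xs i then 1 else -1 with hs
  have hF : HasDerivAt (fun t => ∑ i, s i * dev σ T f (γ t) i) (∑ i, s i * D i) 0 :=
    HasDerivAt.fun_sum fun i _ => (hD i).const_mul (s i)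
  have hsign : ∀ᶠ t in nhds (0:ℝ), ∀ i, |dev σ T f (γ t) i| = s i * dev σ T f (γ t) i := by
    rw [Filter.eventually_all]
    intro i
    rcases (hne i).lt_or_gt with hlt | hgt
    · have hc := (hD i).continuousAt
      have h0 : dev σ T f (γ 0) i < 0 := by rwa [hγ0]
      filter_upwards [hc.eventually_lt continuousAt_const h0] with t ht
      rw [abs_of_neg ht]
      simp only [hs]
      rw [if_neg (not_lt.mpr hlt.le)]; ring
    · have hc := (hD i).continuousAt
      have h0 : (0:ℝ) < dev σ T f (γ 0) i := by rwa [hγ0]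
      filter_upwards [ContinuousAt.eventually_lt continuousAt_const hc h0] with t ht
      rw [abs_of_pos ht]
      simp only [hs]
      rw [if_pos hgt, one_mul]
  have hminγ : ∀ᶠ t in nhds (0:ℝ),
      manhattanLoss σ T f Xs ≤ manhattanLoss σ T f (γ t) := by
    have h := hγc
    rw [ContinuousAt, hγ0] at h
    exact h.eventually hmin
  have hF0 : (∑ i, s i * dev σ T f Xs i) = manhattanLoss σ T f Xs := by
    rw [manhattanLoss]
    refine Finset.sum_congr rfl fun i _ => ?_
    rcases (hne i).lt_or_gt with hlt | hgt
    · simp only [hs]; rw [if_neg (not_lt.mpr hlt.le), abs_of_neg hlt]; ring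
    · simp only [hs]; rw [if_pos hgt, abs_of_pos hgt, one_mul]
  have hlocal : IsLocalMin (fun t => ∑ i, s i * dev σ T f (γ t) i) 0 := by
    have : ∀ᶠ t in nhds (0:ℝ),
        (∑ i, s i * dev σ T f (γ 0) i) ≤ ∑ i, s i * dev σ T f (γ t) i := by
      filter_upwards [hsign, hminγ] with t ht hmt
      have h1 : (∑ i, s i * dev σ T f (γ 0) i) = manhattanLoss σ T f Xs := by
        rw [hγ0]; exact hF0
      have h2 : manhattanLoss σ T f (γ t) = ∑ i, s i * dev σ T f (γ t) i :=
        Finset.sum_congr rfl fun i _ => ht i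
      rw [h1, ← h2]; exact hmt
    exact this
  have hzero : (∑ i, s i * D i) = 0 := by
    have h := hlocal.deriv_eq_zero
    rwa [hF.deriv] at h
  have hdisj : Disjoint P Np := by
    rw [Finset.disjoint_left]
    intro i h1 h2
    exact absurd ((hP i).mp h1) (not_lt.mpr ((hNp i).mp h2).le)
  have hunion : P ∪ Np = Finset.univ := by
    ext i
    simp only [Finset.mem_union, Finset.mem_univ, iff_true, hP, hNp]
    rcases (hne i).lt_or_gt with h | h
    · exact Or.inr h
    · exact Or.inl h
  have h1 : ∑ i ∈ P, s i * D i = ∑ i ∈ P, D i :=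
    Finset.sum_congr rfl fun i hi => by
      simp only [hs]; rw [if_pos ((hP i).mp hi), one_mul]
  have h2 : ∑ i ∈ Np, s i * D i = -∑ i ∈ Np, D i := by
    rw [← Finset.sum_neg_distrib]
    exact Finset.sum_congr rfl fun i hi => by
      simp only [hs]; rw [if_neg (not_lt.mpr ((hNp i).mp hi).le)]; ring
  have hsplit : (∑ i, s i * D i) = ∑ i ∈ P, D i - ∑ i ∈ Np, D i := by
    calc (∑ i, s i * D i) = ∑ i ∈ P ∪ Np, s i * D i := by rw [hunion]
    _ = (∑ i ∈ P, s i * D i) + ∑ i ∈ Np, s i * D i := Finset.sum_union hdisj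
    _ = ∑ i ∈ P, D i - ∑ i ∈ Np, D i := by rw [h1, h2]; ring
  have := hsplit ▸ hzero
  linarith

/-- Simplified necessary optimality condition for Manhattan (ℓ₁) loss approximation, one
hidden layer, when no discretisation point has zero deviation: if `X*` is a local
minimizer of `G` and `dev_i(X*) ≠ 0` for all `i`, then with `P` and `Np` the sets of
indices of positive resp. negative deviation, `∑_{i∈P} Vᵢ = ∑_{i∈Np} Vᵢ`. -/
theorem manhattan_one_hidden_layer_no_zero_deviation (d N n : ℕ) (hd : 0 < d) (hN : 0 < N)
    (hn : 0 < n) (σ : ℝ → ℝ) (hσ : ContDiff ℝ 1 σ) (T : Fin N → Fin d → ℝ) (f : Fin N → ℝ)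
    (Xs : (Fin n → ℝ) × (Fin n → Fin d → ℝ) × (Fin n → ℝ))
    (hmin : IsLocalMin (manhattanLoss σ T f) Xs)
    (hne : ∀ i, dev σ T f Xs i ≠ 0)
    (P Np : Finset (Fin N))
    (hP : ∀ i, i ∈ P ↔ 0 < dev σ T f Xs i)
    (hNp : ∀ i, i ∈ Np ↔ dev σ T f Xs i < 0) :
    (∑ i ∈ P, Vvec σ T Xs i) = ∑ i ∈ Np, Vvec σ T Xs i := by
  refine Prod.ext ?_ ?_
  · rw [Prod.fst_sum, Prod.fst_sum]
    funext j m
    rw [Finset.sum_apply, Finset.sum_apply, Finset.sum_apply, Finset.sum_apply]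
    induction m using Fin.cases with
    | zero =>
      simp only [Vvec, Pi.smul_apply, Fin.cons_zero, smul_eq_mul, mul_one]
      refine key σ T f Xs hmin hne P Np hP hNp
        (fun t => (fun j' => Xs.1 j' + t * 0, fun j' k' => Xs.2.1 j' k' + t * 0,
          fun j' => Xs.2.2 j' + t * (if j' = j then 1 else 0))) ?_ ?_ _ (fun i => ?_)
      · simp
      · fun_prop
      · have h := devHasDerivAt σ hσ T f Xs.1 Xs.2.1 Xs.2.2 (fun _ => 0) (fun _ _ => 0)
          (fun j' => if j' = j then 1 else 0) i
        convert h using 1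
        simp [Finset.sum_ite_eq', mul_ite]
    | succ k =>
      simp only [Vvec, Pi.smul_apply, Fin.cons_succ, smul_eq_mul]
      refine key σ T f Xs hmin hne P Np hP hNp
        (fun t => (fun j' => Xs.1 j' + t * 0,
          fun j' k' => Xs.2.1 j' k' + t * ((if j' = j then 1 else 0) * (if k' = k then 1 else 0)),
          fun j' => Xs.2.2 j' + t * 0)) ?_ ?_ _ (fun i => ?_)
      · simp
      · fun_prop
      · have h := devHasDerivAt σ hσ T f Xs.1 Xs.2.1 Xs.2.2 (fun _ => 0)
          (fun j' k' => (if j' = j then 1 else 0) * (if k' = k then 1 else 0))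
          (fun _ => 0) i
        convert h using 1
        simp [Finset.sum_ite_eq', mul_ite, ite_mul]
        ring
  · rw [Prod.snd_sum, Prod.snd_sum]
    funext j
    rw [Finset.sum_apply, Finset.sum_apply]
    simp only [Vvec]
    refine key σ T f Xs hmin hne P Np hP hNp
      (fun t => (fun j' => Xs.1 j' + t * (if j' = j then 1 else 0),
        fun j' k' => Xs.2.1 j' k' + t * 0, fun j' => Xs.2.2 j' + t * 0)) ?_ ?_ _ (fun i => ?_)
    · simp
    · fun_prop
    · have h := devHasDerivAt σ hσ T f Xs.1 Xs.2.1 Xs.2.2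
        (fun j' => if j' = j then 1 else 0) (fun _ _ => 0) (fun _ => 0) i
      convert h using 1
      simp [Finset.sum_ite_eq', ite_mul]
end
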